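/- There are constants c, C > 0 depending only on n such that the following holds. Let n ≥ 3, let q be an odd prime power, and let A ⊆ M_n(𝔽_q) with |A| ≥ C · q^{n²−1}. Then |{a₁ + a₂a₃ : a₁, a₂, a₃ ∈ A}| ≥ c · q^{n²}. -/

import Mathlib

open Finset Matrix
set_option linter.unusedSectionVars false

namespace MEaux

abbrev Mat (n : ℕ) (F : Type) := Matrix (Fin n) (Fin n) F

variable {n : ℕ} {F : Type} [Field F] [Fintype F]

/-- entrywise pairing -/
def B (m x : Mat n F) : F := ∑ i, ∑ j, m i j * x i j

lemma B_add_left (m m' x : Mat n F) : B (m + m') x = B m x + B m' x := by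
  simp [B, add_mul, Finset.sum_add_distrib]

lemma B_zero_left (x : Mat n F) : B 0 x = 0 := by simp [B]

lemma B_zero_right (m : Mat n F) : B m 0 = 0 := by simp [B]

lemma B_add_right (m x y : Mat n F) : B m (x + y) = B m x + B m y := by
  simp [B, mul_add, Finset.sum_add_distrib]

lemma B_neg_right (m x : Mat n F) : B m (-x) = - B m x := by
  simp [B, Finset.sum_neg_distrib]

lemma B_mul (m b d : Mat n F) : B m (b * d) = B b (m * dᵀ) := by
  unfold B
  simp only [Matrix.mul_apply, Matrix.transpose_apply, Finset.mul_sum]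
  refine Finset.sum_congr rfl fun i _ => ?_
  rw [Finset.sum_comm]
  exact Finset.sum_congr rfl fun k _ => Finset.sum_congr rfl fun j _ => by ring

lemma B_single (i j : Fin n) (v : F) (w : Mat n F) :
    B (Matrix.single i j v) w = v * w i j := by
  classical
  unfold B
  simp [Matrix.single, ite_and, ite_mul, Finset.sum_ite_eq]

/-- the pairing as an `AddMonoidHom` in the first variable -/
def Bhom (w : Mat n F) : Mat n F →+ F where
  toFun m := B m w
  map_zero' := B_zero_left w
  map_add' m m' := B_add_left m m' w

/-- orthogonality -/
lemma sum_e [DecidableEq (Mat n F)] (ψ : AddChar F ℂ) (hψ : ψ ≠ 1) (w : Mat n F) :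
    ∑ m : Mat n F, ψ (B m w)
      = if w = 0 then (Fintype.card F ^ (n * n) : ℂ) else 0 := by
  classical
  split_ifs with h
  · subst h
    have hc : Fintype.card (Mat n F) = Fintype.card F ^ (n * n) := by
      rw [Fintype.card_congr (Matrix.of : (Fin n → Fin n → F) ≃ _).symm]
      simp [pow_mul]
    simp [B_zero_right, hc]
  · have hne : (ψ.compAddMonoidHom (Bhom w)) ≠ 1 := by
      rw [AddChar.ne_one_iff]
      obtain ⟨t, ht⟩ := AddChar.ne_one_iff.mp hψ
      obtain ⟨i, j, hij⟩ : ∃ i j, w i j ≠ 0 := by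
        by_contra hc; push_neg at hc
        exact h (by ext i j; simp [hc])
      refine ⟨Matrix.single i j (t * (w i j)⁻¹), ?_⟩
      have : B (Matrix.single i j (t * (w i j)⁻¹)) w = t := by
        rw [B_single, mul_assoc, inv_mul_cancel₀ hij, mul_one]
      simpa [AddChar.compAddMonoidHom_apply, Bhom, this] using ht
    have := AddChar.sum_eq_zero_of_ne_one hne
    simpa [AddChar.compAddMonoidHom_apply, Bhom] using this

open ComplexConjugate

/-- conjugation of character values -/
lemma conj_psi (ψ : AddChar F ℂ) (m x : Mat n F) :
    conj (ψ (B m x)) = ψ (B m (-x)) := by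
  rw [B_neg_right, AddChar.map_neg_eq_conj]

/-- Parseval / Plancherel identity for the matrix characters -/
lemma parseval [DecidableEq (Mat n F)] (ψ : AddChar F ℂ) (hψ : ψ ≠ 1) (f : Mat n F → ℂ) :
    ∑ m : Mat n F, (∑ x : Mat n F, f x * ψ (B m x)) * conj (∑ x : Mat n F, f x * ψ (B m x))
      = (Fintype.card F ^ (n * n) : ℂ) * ∑ x : Mat n F, f x * conj (f x) := by
  have key : ∀ m : Mat n F, (∑ x : Mat n F, f x * ψ (B m x)) * conj (∑ x : Mat n F, f x * ψ (B m x))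
      = ∑ x : Mat n F, ∑ y : Mat n F, f x * conj (f y) * ψ (B m (x - y)) := by
    intro m
    rw [map_sum, Finset.sum_mul_sum]
    refine Finset.sum_congr rfl fun x _ => Finset.sum_congr rfl fun y _ => ?_
    rw [_root_.map_mul, conj_psi]
    have : ψ (B m x) * ψ (B m (-y)) = ψ (B m (x - y)) := by
      rw [← AddChar.map_add_eq_mul, ← B_add_right, sub_eq_add_neg]
    rw [mul_mul_mul_comm, this]
  calc ∑ m : Mat n F, (∑ x : Mat n F, f x * ψ (B m x)) * conj (∑ x : Mat n F, f x * ψ (B m x))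
      = ∑ m : Mat n F, ∑ x : Mat n F, ∑ y : Mat n F, f x * conj (f y) * ψ (B m (x - y)) := by
        exact Finset.sum_congr rfl fun m _ => key m
    _ = ∑ x : Mat n F, ∑ y : Mat n F, ∑ m : Mat n F, f x * conj (f y) * ψ (B m (x - y)) := by
        rw [Finset.sum_comm]
        exact Finset.sum_congr rfl fun x _ => Finset.sum_comm
    _ = ∑ x : Mat n F, ∑ y : Mat n F, f x * conj (f y) *
          (if x - y = 0 then (Fintype.card F ^ (n * n) : ℂ) else 0) := by
        refine Finset.sum_congr rfl fun x _ => Finset.sum_congr rfl fun y _ => ?_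
        rw [← Finset.mul_sum, sum_e ψ hψ]
    _ = ∑ x : Mat n F, f x * conj (f x) * (Fintype.card F ^ (n * n) : ℂ) := by
        refine Finset.sum_congr rfl fun x _ => ?_
        rw [Finset.sum_eq_single x]
        · simp
        · intro y _ hyx
          rw [if_neg (by simpa [sub_eq_zero] using fun h => hyx h.symm), mul_zero]
        · intro hx; exact absurd (Finset.mem_univ x) hx
    _ = (Fintype.card F ^ (n * n) : ℂ) * ∑ x : Mat n F, f x * conj (f x) := by
        rw [Finset.mul_sum]
        exact Finset.sum_congr rfl fun x _ => mul_comm _ _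


lemma mul_transpose_eq_zero_iff (m d : Mat n F) :
    m * dᵀ = 0 ↔ ∀ k, m.mulVec (d k) = 0 := by
  constructor
  · intro h k; ext i
    have := congrFun (congrFun h i) k
    simpa [Matrix.mul_apply, Matrix.transpose_apply, Matrix.mulVec, dotProduct] using this
  · intro h; ext i k
    have := congrFun (h k) i
    simpa [Matrix.mul_apply, Matrix.transpose_apply, Matrix.mulVec, dotProduct] using this

lemma ker_card_bound [DecidableEq (Mat n F)] {m : Mat n F} (hm : m ≠ 0) :
    (Finset.univ.filter fun d : Mat n F => m * dᵀ = 0).card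
      ≤ Fintype.card F ^ ((n - 1) * n) := by
  classical
  set K := LinearMap.ker (Matrix.mulVecLin m) with hK
  have hKne : K ≠ ⊤ := by
    intro htop
    apply hm
    ext i j
    have hv : (Pi.single j 1 : Fin n → F) ∈ K := htop ▸ Submodule.mem_top
    have hv' : m.mulVec (Pi.single j 1) = 0 := by
      simpa [hK, Matrix.mulVecLin] using hv
    have := congrFun hv' i
    simpa [Matrix.mulVec_single] using this
  have hfin : Module.finrank F K < n := by
    have h1 := Submodule.finrank_lt (K := F) (V := Fin n → F) hKne
    simpa using h1
  have hcard : Fintype.card K ≤ Fintype.card F ^ (n - 1) := by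
    rw [Module.card_eq_pow_finrank (K := F) (V := K)]
    exact Nat.pow_le_pow_right Fintype.card_pos (by omega)
  have hequiv : {d : Mat n F // m * dᵀ = 0} ≃ (Fin n → K) :=
    { toFun := fun d k => ⟨d.1 k, by
        have := (mul_transpose_eq_zero_iff m d.1).mp d.2 k
        simpa [hK, Matrix.mulVecLin] using this⟩
      invFun := fun f => ⟨Matrix.of (fun k j => (f k : Fin n → F) j), by
        rw [mul_transpose_eq_zero_iff]
        intro k
        have h3 : m.mulVecLin ↑(f k) = 0 := LinearMap.mem_ker.mp (f k).2
        rwa [Matrix.mulVecLin_apply] at h3⟩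
      left_inv := fun d => by ext k j; rfl
      right_inv := fun f => by ext k j; rfl }
  calc (Finset.univ.filter fun d : Mat n F => m * dᵀ = 0).card
      = Fintype.card {d : Mat n F // m * dᵀ = 0} := (Fintype.card_subtype _).symm
    _ = Fintype.card (Fin n → K) := Fintype.card_congr hequiv
    _ = Fintype.card K ^ n := by simp [Fintype.card_fun]
    _ ≤ (Fintype.card F ^ (n - 1)) ^ n := Nat.pow_le_pow_left hcard n
    _ = Fintype.card F ^ ((n - 1) * n) := by rw [← pow_mul]


lemma normSq_eq_norm_sq (z : ℂ) : Complex.normSq z = ‖z‖ ^ 2 := by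
  rw [Complex.sq_norm]

lemma rhat_bound [DecidableEq (Mat n F)] (ψ : AddChar F ℂ) (hψ : ψ ≠ 1)
    (T : Finset (Mat n F)) {m : Mat n F} (hm : m ≠ 0) :
    ‖∑ b ∈ T, ∑ c ∈ T, ψ (B m (b * c))‖ ^ 2
      ≤ (T.card : ℝ) ^ 2 * (Fintype.card F : ℝ) ^ (n * n)
          * (Fintype.card F : ℝ) ^ ((n - 1) * n) := by
  classical
  set g : Mat n F → ℂ := fun b => ∑ c ∈ T, ψ (B m (b * c)) with hg
  set cnt : ℕ := ((T ×ˢ T).filter fun p : Mat n F × Mat n F => m * (p.1 - p.2)ᵀ = 0).card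
    with hcnt
  have hcount : ∑ b : Mat n F, g b * (starRingEnd ℂ) (g b)
      = (Fintype.card F ^ (n * n) : ℂ) * (cnt : ℂ) := by
    calc ∑ b : Mat n F, g b * (starRingEnd ℂ) (g b)
        = ∑ b : Mat n F, ∑ c ∈ T, ∑ c' ∈ T, ψ (B b (m * (c - c')ᵀ)) := by
          refine Finset.sum_congr rfl fun b _ => ?_
          rw [hg, map_sum, Finset.sum_mul_sum]
          refine Finset.sum_congr rfl fun c _ => Finset.sum_congr rfl fun c' _ => ?_
          rw [conj_psi, ← AddChar.map_add_eq_mul, ← B_add_right]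
          congr 1
          rw [← B_mul, mul_sub, sub_eq_add_neg]
      _ = ∑ c ∈ T, ∑ c' ∈ T, ∑ b : Mat n F, ψ (B b (m * (c - c')ᵀ)) := by
          rw [Finset.sum_comm]
          exact Finset.sum_congr rfl fun c _ => Finset.sum_comm
      _ = ∑ c ∈ T, ∑ c' ∈ T,
            (if m * (c - c')ᵀ = 0 then (Fintype.card F ^ (n * n) : ℂ) else 0) := by
          refine Finset.sum_congr rfl fun c _ => Finset.sum_congr rfl fun c' _ => ?_
          rw [sum_e ψ hψ]
      _ = ∑ p ∈ T ×ˢ T,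
            (if m * (p.1 - p.2)ᵀ = 0 then (Fintype.card F ^ (n * n) : ℂ) else 0) := by
          rw [Finset.sum_product]
      _ = (Fintype.card F ^ (n * n) : ℂ) * (cnt : ℂ) := by
          rw [Finset.sum_ite, Finset.sum_const, Finset.sum_const_zero, add_zero,
            nsmul_eq_mul, mul_comm, hcnt]
  have h5 : ∑ b : Mat n F, ‖g b‖ ^ 2
      = (Fintype.card F : ℝ) ^ (n * n) * (cnt : ℝ) := by
    have : ((∑ b : Mat n F, ‖g b‖ ^ 2 : ℝ) : ℂ)
        = (((Fintype.card F : ℝ) ^ (n * n) * (cnt : ℝ) : ℝ) : ℂ) := by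
      push_cast
      rw [← hcount]
      push_cast
      refine Finset.sum_congr rfl fun b _ => ?_
      rw [Complex.mul_conj, normSq_eq_norm_sq]
      push_cast
      ring
    exact_mod_cast this
  have h6 : (cnt : ℝ) ≤ (T.card : ℝ) * (Fintype.card F : ℝ) ^ ((n - 1) * n) := by
    have hinj : cnt ≤ (T ×ˢ (Finset.univ.filter fun d : Mat n F => m * dᵀ = 0)).card := by
      rw [hcnt]
      apply Finset.card_le_card_of_injOn (fun p => (p.2, p.1 - p.2))
      · intro p hp
        rw [Finset.mem_coe, Finset.mem_filter, Finset.mem_product] at hp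
        rw [Finset.mem_coe, Finset.mem_product, Finset.mem_filter]
        exact ⟨hp.1.2, Finset.mem_univ _, hp.2⟩
      · intro p _ q _ h
        have h1 := congrArg Prod.fst h
        have h2 := congrArg Prod.snd h
        simp only at h1 h2
        have : p.1 = q.1 := by
          have := congrArg (· + p.2) h2
          simpa [h1, sub_add_cancel] using this
        exact Prod.ext this h1
    have hcard2 : (T ×ˢ (Finset.univ.filter fun d : Mat n F => m * dᵀ = 0)).card
        ≤ T.card * Fintype.card F ^ ((n - 1) * n) := by
      rw [Finset.card_product]
      exact Nat.mul_le_mul_left _ (ker_card_bound hm)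
    calc (cnt : ℝ) ≤ ((T.card * Fintype.card F ^ ((n - 1) * n) : ℕ) : ℝ) := by
          exact_mod_cast le_trans hinj hcard2
      _ = (T.card : ℝ) * (Fintype.card F : ℝ) ^ ((n - 1) * n) := by push_cast; ring
  have h1 : ‖∑ b ∈ T, g b‖ ≤ ∑ b ∈ T, ‖g b‖ := norm_sum_le _ _
  have h2 : (∑ b ∈ T, ‖g b‖) ^ 2 ≤ (T.card : ℝ) * ∑ b ∈ T, ‖g b‖ ^ 2 :=
    sq_sum_le_card_mul_sum_sq
  have h3 : ∑ b ∈ T, ‖g b‖ ^ 2 ≤ ∑ b : Mat n F, ‖g b‖ ^ 2 :=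
    Finset.sum_le_sum_of_subset_of_nonneg (Finset.subset_univ T)
      (fun i _ _ => sq_nonneg _)
  calc ‖∑ b ∈ T, ∑ c ∈ T, ψ (B m (b * c))‖ ^ 2
      = ‖∑ b ∈ T, g b‖ ^ 2 := by rw [hg]
    _ ≤ (∑ b ∈ T, ‖g b‖) ^ 2 := by
        apply pow_le_pow_left₀ (norm_nonneg _) h1
    _ ≤ (T.card : ℝ) * ∑ b ∈ T, ‖g b‖ ^ 2 := h2
    _ ≤ (T.card : ℝ) * ∑ b : Mat n F, ‖g b‖ ^ 2 := by
        apply mul_le_mul_of_nonneg_left h3 (Nat.cast_nonneg _)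
    _ = (T.card : ℝ) * ((Fintype.card F : ℝ) ^ (n * n) * (cnt : ℝ)) := by rw [h5]
    _ ≤ (T.card : ℝ) * ((Fintype.card F : ℝ) ^ (n * n)
          * ((T.card : ℝ) * (Fintype.card F : ℝ) ^ ((n - 1) * n))) := by
        have hQ : (0:ℝ) ≤ (Fintype.card F : ℝ) ^ (n * n) := by positivity
        have := mul_le_mul_of_nonneg_left h6 hQ
        exact mul_le_mul_of_nonneg_left this (Nat.cast_nonneg _)
    _ = (T.card : ℝ) ^ 2 * (Fintype.card F : ℝ) ^ (n * n)
          * (Fintype.card F : ℝ) ^ ((n - 1) * n) := by ring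


end MEaux

open MEaux Finset

set_option maxHeartbeats 1000000 in
/-- x + yz is a moderate expander over M_n(F_q) with exponent one. -/
theorem moderate_expander_x_add_yz_Mn (n : ℕ) (hn : 3 ≤ n) :
    ∃ c C : ℝ, 0 < c ∧ 0 < C ∧
      ∀ (F : Type) [Field F] [Fintype F],
        Odd (Fintype.card F) →
        ∀ A : Set (Matrix (Fin n) (Fin n) F),
          C * (Fintype.card F : ℝ) ^ ((n : ℝ) ^ 2 - 1) ≤ (A.ncard : ℝ) →
          c * (Fintype.card F : ℝ) ^ ((n : ℝ) ^ 2) ≤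
            ({x | ∃ a₁ ∈ A, ∃ a₂ ∈ A, ∃ a₃ ∈ A, x = a₁ + a₂ * a₃}.ncard : ℝ) := by
  classical
  refine ⟨1/2, 1, by norm_num, by norm_num, ?_⟩
  intro F _ _ _hodd A hA
  classical
  set q : ℕ := Fintype.card F with hqdef
  have hq1 : 1 ≤ q := Fintype.card_pos
  have hq1R : (1:ℝ) ≤ (q:ℝ) := by exact_mod_cast hq1
  -- a nontrivial additive character of F with values in ℂ
  obtain ⟨ψ, hψ1⟩ := (AddChar.exists_apply_ne_zero (a := (1:F))).mpr one_ne_zero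
  have hψ : ψ ≠ 1 := AddChar.ne_one_iff.mpr ⟨1, hψ1⟩
  -- the set A as a Finset
  have hAfin : A.Finite := Set.toFinite A
  set T : Finset (Mat n F) := hAfin.toFinset with hTdef
  have hTA : ∀ x, x ∈ T ↔ x ∈ A := fun x => hAfin.mem_toFinset
  have hTcard : (A.ncard : ℝ) = (T.card : ℝ) := by
    rw [Set.ncard_eq_toFinset_card _ hAfin]
  -- the hypothesis, in convenient form
  have hA' : ((q : ℝ)) ^ (n * n - 1) ≤ (T.card : ℝ) := by
    have h2 : (1:ℕ) ≤ n * n := by nlinarith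
    have h1 : ((n:ℝ)^2 - 1) = ((n*n - 1 : ℕ) : ℝ) := by
      push_cast [h2]
      ring
    rw [one_mul, h1, Real.rpow_natCast] at hA
    calc ((q:ℝ)) ^ (n*n - 1) ≤ (A.ncard : ℝ) := hA
      _ = (T.card : ℝ) := hTcard
  have ha1 : (1:ℝ) ≤ (T.card : ℝ) :=
    le_trans (one_le_pow₀ hq1R) hA'
  have ha0 : (0:ℝ) ≤ (T.card : ℝ) := by linarith
  -- the target set as a Finset
  set S : Set (Mat n F) := {x | ∃ a₁ ∈ A, ∃ a₂ ∈ A, ∃ a₃ ∈ A, x = a₁ + a₂ * a₃} with hSdef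
  have hSfin : S.Finite := Set.toFinite S
  set Sf : Finset (Mat n F) := hSfin.toFinset with hSfdef
  have hScard : (S.ncard : ℝ) = (Sf.card : ℝ) := by
    rw [Set.ncard_eq_toFinset_card _ hSfin]
  -- representation counting function
  set ν : Mat n F → ℕ :=
    fun x => ((T ×ˢ T ×ˢ T).filter fun p => p.1 + p.2.1 * p.2.2 = x).card with hνdef
  have hν0 : ∀ x, x ∉ Sf → ν x = 0 := by
    intro x hx
    rw [hνdef]
    rw [Finset.card_eq_zero, Finset.filter_eq_empty_iff]
    rintro p hp hpx
    apply hx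
    rw [hSfdef, hSfin.mem_toFinset]
    rw [Finset.mem_product, Finset.mem_product] at hp
    exact ⟨p.1, (hTA _).mp hp.1, p.2.1, (hTA _).mp hp.2.1, p.2.2, (hTA _).mp hp.2.2,
      hpx.symm⟩
  have hν1 : ∑ x : Mat n F, ν x = T.card ^ 3 := by
    have h := Finset.card_eq_sum_card_fiberwise
      (s := T ×ˢ T ×ˢ T) (t := Finset.univ)
      (f := fun p : Mat n F × Mat n F × Mat n F => p.1 + p.2.1 * p.2.2)
      (fun x _ => Finset.mem_univ _)
    rw [hνdef]
    rw [← h, Finset.card_product, Finset.card_product]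
    ring
  -- Fourier coefficients
  set Ah : Mat n F → ℂ := fun m => ∑ x ∈ T, ψ (B m x) with hAh
  set Rh : Mat n F → ℂ := fun m => ∑ b ∈ T, ∑ c ∈ T, ψ (B m (b * c)) with hRh
  set W : Mat n F → ℂ := fun m => ∑ x : Mat n F, ((ν x : ℂ)) * ψ (B m x) with hWdef
  have hW : ∀ m : Mat n F, W m = Ah m * Rh m := by
    intro m
    rw [hWdef, hAh, hRh]
    simp only
    calc ∑ x : Mat n F, ((ν x : ℂ)) * ψ (B m x)
        = ∑ x : Mat n F, ∑ p ∈ T ×ˢ T ×ˢ T,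
            (if p.1 + p.2.1 * p.2.2 = x then ψ (B m x) else 0) := by
          refine Finset.sum_congr rfl fun x _ => ?_
          rw [hνdef]
          simp only
          rw [Finset.card_filter]
          push_cast
          rw [Finset.sum_mul]
          exact Finset.sum_congr rfl fun p _ => by rw [ite_mul, one_mul, zero_mul]
      _ = ∑ p ∈ T ×ˢ T ×ˢ T, ∑ x : Mat n F,
            (if p.1 + p.2.1 * p.2.2 = x then ψ (B m x) else 0) := Finset.sum_comm
      _ = ∑ p ∈ T ×ˢ T ×ˢ T, ψ (B m (p.1 + p.2.1 * p.2.2)) := by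
          refine Finset.sum_congr rfl fun p _ => ?_
          rw [Finset.sum_ite_eq]
          simp
      _ = (∑ x ∈ T, ψ (B m x)) * (∑ b ∈ T, ∑ c ∈ T, ψ (B m (b * c))) := by
          rw [Finset.sum_mul_sum, Finset.sum_product]
          refine Finset.sum_congr rfl fun a _ => ?_
          rw [Finset.sum_product]
          refine Finset.sum_congr rfl fun b _ => ?_
          rw [Finset.mul_sum]
          refine Finset.sum_congr rfl fun c _ => ?_
          rw [B_add_right, AddChar.map_add_eq_mul]
  -- Parseval for W
  have hParC := MEaux.parseval (n := n) ψ hψ (fun x => ((ν x : ℕ) : ℂ))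
  have hParR : ∑ m : Mat n F, ‖W m‖ ^ 2
      = (q:ℝ) ^ (n * n) * ∑ x : Mat n F, ((ν x : ℝ)) ^ 2 := by
    have hc : ((∑ m : Mat n F, ‖W m‖ ^ 2 : ℝ) : ℂ)
        = (((q:ℝ) ^ (n * n) * ∑ x : Mat n F, ((ν x : ℝ)) ^ 2 : ℝ) : ℂ) := by
      push_cast
      calc ∑ m : Mat n F, ((‖W m‖ : ℂ)) ^ 2
          = ∑ m : Mat n F, W m * (starRingEnd ℂ) (W m) := by
            refine Finset.sum_congr rfl fun m _ => ?_
            rw [Complex.mul_conj, normSq_eq_norm_sq]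
            push_cast
            ring
        _ = (Fintype.card F ^ (n * n) : ℂ)
              * ∑ x : Mat n F, ((ν x : ℂ)) * (starRingEnd ℂ) ((ν x : ℂ)) := hParC
        _ = ((q:ℕ) : ℂ) ^ (n * n) * ∑ x : Mat n F, ((ν x : ℂ)) ^ 2 := by
            rw [← hqdef]
            push_cast
            refine congrArg _ (Finset.sum_congr rfl fun x _ => ?_)
            rw [Complex.conj_natCast]
            ring
        _ = ((q:ℕ) : ℂ) ^ (n * n) * ∑ x : Mat n F, (((ν x : ℝ)) ^ 2 : ℂ) := by
            push_cast
            rfl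
    exact_mod_cast hc
  -- Parseval for the indicator of T
  have hParAC := MEaux.parseval (n := n) ψ hψ
    (fun x => if x ∈ T then (1:ℂ) else 0)
  have hind : ∀ m : Mat n F,
      (∑ x : Mat n F, (if x ∈ T then (1:ℂ) else 0) * ψ (B m x)) = Ah m := by
    intro m
    rw [hAh]
    simp only [ite_mul, one_mul, zero_mul]
    rw [Finset.sum_ite_mem, Finset.univ_inter]
  have hParA : ∑ m : Mat n F, ‖Ah m‖ ^ 2 = (q:ℝ) ^ (n * n) * (T.card : ℝ) := by
    have hc : ((∑ m : Mat n F, ‖Ah m‖ ^ 2 : ℝ) : ℂ)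
        = (((q:ℝ) ^ (n * n) * (T.card : ℝ) : ℝ) : ℂ) := by
      push_cast
      calc ∑ m : Mat n F, ((‖Ah m‖ : ℂ)) ^ 2
          = ∑ m : Mat n F, Ah m * (starRingEnd ℂ) (Ah m) := by
            refine Finset.sum_congr rfl fun m _ => ?_
            rw [Complex.mul_conj, normSq_eq_norm_sq]
            push_cast
            ring
        _ = (Fintype.card F ^ (n * n) : ℂ) * ∑ x : Mat n F,
              (if x ∈ T then (1:ℂ) else 0) * (starRingEnd ℂ) (if x ∈ T then (1:ℂ) else 0) := by
            rw [← hParAC]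
            refine Finset.sum_congr rfl fun m _ => ?_
            rw [hind m]
        _ = ((q:ℕ) : ℂ) ^ (n * n) * (T.card : ℂ) := by
            rw [← hqdef]
            congr 1
            have hterm : ∀ x : Mat n F,
                (if x ∈ T then (1:ℂ) else 0) * (starRingEnd ℂ) (if x ∈ T then (1:ℂ) else 0)
                = if x ∈ T then (1:ℂ) else 0 := by
              intro x
              by_cases hx : x ∈ T <;> simp [hx]
            rw [Finset.sum_congr rfl fun x _ => hterm x]
            rw [Finset.sum_ite_mem, Finset.univ_inter, Finset.sum_const, nsmul_eq_mul,
              mul_one]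
    exact_mod_cast hc
  -- trivial bounds for the Fourier coefficients
  have hAhle : ∀ m : Mat n F, ‖Ah m‖ ≤ (T.card : ℝ) := by
    intro m
    rw [hAh]
    refine le_trans (norm_sum_le _ _) ?_
    rw [Finset.sum_congr rfl (fun x _ => AddChar.norm_apply ψ _)]
    simp
  have hRhle : ∀ m : Mat n F, ‖Rh m‖ ≤ (T.card : ℝ) ^ 2 := by
    intro m
    rw [hRh]
    refine le_trans (norm_sum_le _ _) ?_
    have : ∀ b : Mat n F, ‖∑ c ∈ T, ψ (B m (b * c))‖ ≤ (T.card : ℝ) := by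
      intro b
      refine le_trans (norm_sum_le _ _) ?_
      rw [Finset.sum_congr rfl (fun x _ => AddChar.norm_apply ψ _)]
      simp
    refine le_trans (Finset.sum_le_sum fun b _ => this b) ?_
    simp [sq]
  -- main energy estimate
  have hmain : ∑ m : Mat n F, ‖W m‖ ^ 2
      ≤ (T.card : ℝ) ^ 6
        + ((T.card : ℝ) ^ 2 * (q:ℝ) ^ (n * n) * (q:ℝ) ^ ((n - 1) * n))
          * ((q:ℝ) ^ (n * n) * (T.card : ℝ)) := by
    rw [← Finset.add_sum_erase Finset.univ _ (Finset.mem_univ (0 : Mat n F))]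
    have hW0 : ‖W 0‖ ^ 2 ≤ (T.card : ℝ) ^ 6 := by
      rw [hW 0, norm_mul, mul_pow]
      have h1 := hAhle 0
      have h2 := hRhle 0
      have := mul_le_mul (pow_le_pow_left₀ (norm_nonneg _) h1 2)
        (pow_le_pow_left₀ (norm_nonneg _) h2 2) (pow_nonneg (norm_nonneg _) 2)
        (pow_nonneg (Nat.cast_nonneg _) 2)
      calc ‖Ah 0‖ ^ 2 * ‖Rh 0‖ ^ 2 ≤ (T.card : ℝ) ^ 2 * ((T.card : ℝ) ^ 2) ^ 2 := this
        _ = (T.card : ℝ) ^ 6 := by ring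
    have herase : ∑ m ∈ Finset.univ.erase (0 : Mat n F), ‖W m‖ ^ 2
        ≤ ((T.card : ℝ) ^ 2 * (q:ℝ) ^ (n * n) * (q:ℝ) ^ ((n - 1) * n))
          * ((q:ℝ) ^ (n * n) * (T.card : ℝ)) := by
      have hterm : ∀ m ∈ Finset.univ.erase (0 : Mat n F),
          ‖W m‖ ^ 2 ≤ ((T.card : ℝ) ^ 2 * (q:ℝ) ^ (n * n) * (q:ℝ) ^ ((n - 1) * n))
            * ‖Ah m‖ ^ 2 := by
        intro m hm
        have hm0 : m ≠ 0 := Finset.ne_of_mem_erase hm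
        have hb := MEaux.rhat_bound (n := n) ψ hψ T hm0
        rw [← hqdef] at hb
        rw [hW m, norm_mul, mul_pow, mul_comm]
        exact mul_le_mul_of_nonneg_right (le_trans (le_of_eq (by rw [hRh])) hb)
          (pow_nonneg (norm_nonneg _) 2)
      refine le_trans (Finset.sum_le_sum hterm) ?_
      rw [← Finset.mul_sum]
      refine mul_le_mul_of_nonneg_left ?_
        (mul_nonneg (mul_nonneg (pow_nonneg (Nat.cast_nonneg _) 2)
          (pow_nonneg (Nat.cast_nonneg _) _)) (pow_nonneg (Nat.cast_nonneg _) _))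
      refine le_trans (Finset.sum_le_sum_of_subset_of_nonneg
        (Finset.erase_subset _ _) (fun m _ _ => pow_nonneg (norm_nonneg _) 2)) ?_
      rw [hParA]
    exact add_le_add hW0 herase
  -- the exponent comparison
  have hexp : ((q:ℝ) ^ (n * n)) ^ 2 * (q:ℝ) ^ ((n - 1) * n) ≤ (T.card : ℝ) ^ 3 := by
    have hnn : n ≤ n * n := Nat.le_mul_of_pos_left n (by omega)
    have hsub : (n - 1) * n = n * n - n := by
      rw [Nat.sub_one_mul]
    have hee : 2 * (n * n) + (n - 1) * n ≤ (n * n - 1) * 3 := by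
      omega
    calc ((q:ℝ) ^ (n * n)) ^ 2 * (q:ℝ) ^ ((n - 1) * n)
        = (q:ℝ) ^ (2 * (n * n) + (n - 1) * n) := by
          rw [pow_add, ← pow_mul, mul_comm (n*n) 2]
      _ ≤ (q:ℝ) ^ ((n * n - 1) * 3) := pow_le_pow_right₀ hq1R hee
      _ = ((q:ℝ) ^ (n * n - 1)) ^ 3 := by rw [pow_mul]
      _ ≤ (T.card : ℝ) ^ 3 := pow_le_pow_left₀ (pow_nonneg (Nat.cast_nonneg _) _) hA' 3
  -- energy is at most twice the main term
  have hE2 : (q:ℝ) ^ (n * n) * (∑ x : Mat n F, ((ν x : ℝ)) ^ 2)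
      ≤ 2 * (T.card : ℝ) ^ 6 := by
    rw [← hParR]
    refine le_trans hmain ?_
    have : ((T.card : ℝ) ^ 2 * (q:ℝ) ^ (n * n) * (q:ℝ) ^ ((n - 1) * n))
        * ((q:ℝ) ^ (n * n) * (T.card : ℝ))
        = (T.card : ℝ) ^ 3 * (((q:ℝ) ^ (n * n)) ^ 2 * (q:ℝ) ^ ((n - 1) * n)) := by
      ring
    rw [this]
    have h2 : (T.card : ℝ) ^ 3 * (((q:ℝ) ^ (n * n)) ^ 2 * (q:ℝ) ^ ((n - 1) * n))
        ≤ (T.card : ℝ) ^ 3 * (T.card : ℝ) ^ 3 :=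
      mul_le_mul_of_nonneg_left hexp (pow_nonneg (Nat.cast_nonneg _) 3)
    nlinarith [h2]
  -- Cauchy–Schwarz
  have hCS : (T.card : ℝ) ^ 6 ≤ (Sf.card : ℝ) * ∑ x : Mat n F, ((ν x : ℝ)) ^ 2 := by
    have hsum : ∑ x ∈ Sf, ((ν x : ℝ)) = (T.card : ℝ) ^ 3 := by
      have h1 : ∑ x ∈ Sf, ((ν x : ℝ)) = ∑ x : Mat n F, ((ν x : ℝ)) := by
        refine Finset.sum_subset (Finset.subset_univ Sf) fun x _ hx => ?_
        rw [hν0 x hx]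
        norm_num
      rw [h1]
      rw [← Nat.cast_sum, hν1]
      push_cast
      ring
    have h2 : ((∑ x ∈ Sf, ((ν x : ℝ))) ^ 2) ≤ (Sf.card : ℝ) * ∑ x ∈ Sf, ((ν x : ℝ)) ^ 2 :=
      sq_sum_le_card_mul_sum_sq
    have h3 : ∑ x ∈ Sf, ((ν x : ℝ)) ^ 2 ≤ ∑ x : Mat n F, ((ν x : ℝ)) ^ 2 :=
      Finset.sum_le_sum_of_subset_of_nonneg (Finset.subset_univ Sf)
        (fun x _ _ => sq_nonneg _)
    calc (T.card : ℝ) ^ 6 = ((T.card : ℝ) ^ 3) ^ 2 := by ring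
      _ = (∑ x ∈ Sf, ((ν x : ℝ))) ^ 2 := by rw [hsum]
      _ ≤ (Sf.card : ℝ) * ∑ x ∈ Sf, ((ν x : ℝ)) ^ 2 := h2
      _ ≤ (Sf.card : ℝ) * ∑ x : Mat n F, ((ν x : ℝ)) ^ 2 :=
          mul_le_mul_of_nonneg_left h3 (Nat.cast_nonneg _)
  -- combine
  have hfinal : (q:ℝ) ^ (n * n) ≤ 2 * (Sf.card : ℝ) := by
    have h1 : (q:ℝ) ^ (n * n) * (T.card : ℝ) ^ 6
        ≤ (Sf.card : ℝ) * (2 * (T.card : ℝ) ^ 6) := by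
      calc (q:ℝ) ^ (n * n) * (T.card : ℝ) ^ 6
          ≤ (q:ℝ) ^ (n * n) * ((Sf.card : ℝ) * ∑ x : Mat n F, ((ν x : ℝ)) ^ 2) :=
            mul_le_mul_of_nonneg_left hCS (pow_nonneg (Nat.cast_nonneg _) _)
        _ = (Sf.card : ℝ) * ((q:ℝ) ^ (n * n) * ∑ x : Mat n F, ((ν x : ℝ)) ^ 2) := by ring
        _ ≤ (Sf.card : ℝ) * (2 * (T.card : ℝ) ^ 6) :=
            mul_le_mul_of_nonneg_left hE2 (Nat.cast_nonneg _)
    have ha6 : (0:ℝ) < (T.card : ℝ) ^ 6 := pow_pos (by linarith) 6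
    have h2 : (q:ℝ) ^ (n * n) * (T.card : ℝ) ^ 6 ≤ (2 * (Sf.card : ℝ)) * (T.card : ℝ) ^ 6 := by
      calc (q:ℝ) ^ (n * n) * (T.card : ℝ) ^ 6 ≤ (Sf.card : ℝ) * (2 * (T.card : ℝ) ^ 6) := h1
        _ = (2 * (Sf.card : ℝ)) * (T.card : ℝ) ^ 6 := by ring
    exact le_of_mul_le_mul_right h2 ha6
  -- finish
  have hgoal : (1/2 : ℝ) * (q:ℝ) ^ (n * n) ≤ (S.ncard : ℝ) := by
    rw [hScard]
    linarith
  have hrpow : (Fintype.card F : ℝ) ^ ((n : ℝ) ^ 2) = (q:ℝ) ^ (n * n) := by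
    have h1 : ((n:ℝ)^2) = ((n*n : ℕ) : ℝ) := by push_cast; ring
    rw [h1, Real.rpow_natCast, ← hqdef]
  rw [hrpow]
  exact hgoal
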